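/- arXiv:2211.01083 — 2 statements merged into one kernel-verified Lean document; each statement's English description precedes it below -/
import Mathlib

section
/- Let T_k be the complete binary tree of depth k ≥ 1. In Maker-Breaker Incidence, Ls(T_k) = 2^{k−1} and Rs(T_k) = 2^{k−1} − 1. -/
/-- Minimax value of a scoring positional game: players alternately claim
unclaimed vertices (`turn = true` means Left/Maker to move); when all vertices
are claimed the value is given by `score VL VR`. Left maximizes, Right minimizes. -/
noncomputable def gameValue {V : Type} [Fintype V] [DecidableEq V]
    (score : Finset V → Finset V → ℤ) :
    Bool → Finset V → Finset V → ℤ := fun turn VL VR =>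
  if h : (VL ∪ VR)ᶜ = (∅ : Finset V) then score VL VR
  else
    have hne : ((VL ∪ VR)ᶜ).attach.Nonempty :=
      Finset.attach_nonempty_iff.mpr (Finset.nonempty_iff_ne_empty.mpr h)
    if turn then
      ((VL ∪ VR)ᶜ).attach.sup' hne (fun v => gameValue score false (insert v.1 VL) VR)
    else
      ((VL ∪ VR)ᶜ).attach.inf' hne (fun v => gameValue score true VL (insert v.1 VR))
termination_by turn VL VR => ((VL ∪ VR)ᶜ).card
decreasing_by
  · rw [Finset.insert_union, Finset.compl_insert]
    exact Finset.card_erase_lt_of_mem v.2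
  · rw [Finset.union_insert, Finset.compl_insert]
    exact Finset.card_erase_lt_of_mem v.2

/-- Maker-Breaker Incidence final score: number of edges of `G` both of whose
endpoints belong to Left's (Maker's) set. -/
noncomputable def mbScore {V : Type} [Fintype V] [DecidableEq V]
    (G : SimpleGraph V) (VL : Finset V) (_ : Finset V) : ℤ :=
  ({e ∈ G.edgeSet | ∀ w ∈ e, w ∈ VL} : Set (Sym2 V)).ncard

/-- Maker-Maker Incidence final score: Left's edges minus Right's edges. -/
noncomputable def mmScore {V : Type} [Fintype V] [DecidableEq V]
    (G : SimpleGraph V) (VL VR : Finset V) : ℤ :=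
  (({e ∈ G.edgeSet | ∀ w ∈ e, w ∈ VL} : Set (Sym2 V)).ncard : ℤ)
    - (({e ∈ G.edgeSet | ∀ w ∈ e, w ∈ VR} : Set (Sym2 V)).ncard : ℤ)

noncomputable def LsMB {V : Type} [Fintype V] [DecidableEq V] (G : SimpleGraph V) : ℤ :=
  gameValue (mbScore G) true ∅ ∅

noncomputable def RsMB {V : Type} [Fintype V] [DecidableEq V] (G : SimpleGraph V) : ℤ :=
  gameValue (mbScore G) false ∅ ∅

noncomputable def LsMM {V : Type} [Fintype V] [DecidableEq V] (G : SimpleGraph V) : ℤ :=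
  gameValue (mmScore G) true ∅ ∅

noncomputable def RsMM {V : Type} [Fintype V] [DecidableEq V] (G : SimpleGraph V) : ℤ :=
  gameValue (mmScore G) false ∅ ∅

/-- Maker-Breaker final score on a hypergraph with edge set `E`. -/
def mbScoreH {V : Type} [Fintype V] [DecidableEq V]
    (E : Finset (Finset V)) (VL : Finset V) (_ : Finset V) : ℤ :=
  ((E.filter (fun e => e ⊆ VL)).card : ℤ)

/-- Maker-Maker final score on a hypergraph with edge set `E`. -/
def mmScoreH {V : Type} [Fintype V] [DecidableEq V]
    (E : Finset (Finset V)) (VL VR : Finset V) : ℤ :=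
  ((E.filter (fun e => e ⊆ VL)).card : ℤ) - ((E.filter (fun e => e ⊆ VR)).card : ℤ)

/-- The complete binary tree of depth `k`, with vertices indexed in heap order:
vertex `i` (for `1 ≤ i ≤ 2^{k+1} - 1`) has children `2i` and `2i+1`. -/
def binTree (k : ℕ) : SimpleGraph (Fin (2 ^ (k + 1) - 1)) :=
  SimpleGraph.fromRel
    (fun a b => (b.1 + 1) = 2 * (a.1 + 1) ∨ (b.1 + 1) = 2 * (a.1 + 1) + 1)


section
variable {V : Type} [Fintype V] [DecidableEq V] (score : Finset V → Finset V → ℤ)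

theorem gv_terminal (VL VR : Finset V) (h : (VL ∪ VR)ᶜ = (∅ : Finset V)) (t : Bool) :
    gameValue score t VL VR = score VL VR := by
  rw [gameValue]; simp [h]

theorem gv_true_nonterminal (VL VR : Finset V) (h : (VL ∪ VR)ᶜ ≠ (∅ : Finset V)) :
    gameValue score true VL VR =
      ((VL ∪ VR)ᶜ).attach.sup'
        (Finset.attach_nonempty_iff.mpr (Finset.nonempty_iff_ne_empty.mpr h))
        (fun v => gameValue score false (insert v.1 VL) VR) := by
  rw [gameValue]; rw [dif_neg h]; rfl

theorem gv_false_nonterminal (VL VR : Finset V) (h : (VL ∪ VR)ᶜ ≠ (∅ : Finset V)) :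
    gameValue score false VL VR =
      ((VL ∪ VR)ᶜ).attach.inf'
        (Finset.attach_nonempty_iff.mpr (Finset.nonempty_iff_ne_empty.mpr h))
        (fun v => gameValue score true VL (insert v.1 VR)) := by
  rw [gameValue]; rw [dif_neg h]; rfl

set_option maxHeartbeats 1000000

theorem gv_true_le (VL VR : Finset V) (h : (VL ∪ VR)ᶜ ≠ (∅ : Finset V)) (B : ℤ)
    (hb : ∀ u ∈ (VL ∪ VR)ᶜ, gameValue score false (insert u VL) VR ≤ B) :
    gameValue score true VL VR ≤ B := by
  rw [gv_true_nonterminal score VL VR h]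
  exact Finset.sup'_le _ _ (fun v _ => hb v.1 v.2)

theorem le_gv_true (VL VR : Finset V) (h : (VL ∪ VR)ᶜ ≠ (∅ : Finset V)) (u : V)
    (hu : u ∈ (VL ∪ VR)ᶜ) :
    gameValue score false (insert u VL) VR ≤ gameValue score true VL VR := by
  rw [gv_true_nonterminal score VL VR h]
  exact Finset.le_sup' (f := fun v => gameValue score false (insert v.1 VL) VR)
    (b := (⟨u, hu⟩ : {x // x ∈ (VL ∪ VR)ᶜ})) (Finset.mem_attach _ _)

theorem le_gv_false (VL VR : Finset V) (h : (VL ∪ VR)ᶜ ≠ (∅ : Finset V)) (B : ℤ)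
    (hb : ∀ u ∈ (VL ∪ VR)ᶜ, B ≤ gameValue score true VL (insert u VR)) :
    B ≤ gameValue score false VL VR := by
  rw [gv_false_nonterminal score VL VR h]
  exact Finset.le_inf' _ _ (fun v _ => hb v.1 v.2)

theorem gv_false_le (VL VR : Finset V) (h : (VL ∪ VR)ᶜ ≠ (∅ : Finset V)) (u : V)
    (hu : u ∈ (VL ∪ VR)ᶜ) :
    gameValue score false VL VR ≤ gameValue score true VL (insert u VR) := by
  rw [gv_false_nonterminal score VL VR h]
  exact Finset.inf'_le (f := fun v => gameValue score true VL (insert v.1 VR))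
    (b := (⟨u, hu⟩ : {x // x ∈ (VL ∪ VR)ᶜ})) (Finset.mem_attach _ _)
end

namespace MBIproof

variable {k : ℕ}

abbrev NN (k : ℕ) : ℕ := 2 ^ (k + 1) - 1

lemma two_pow_succ (k : ℕ) : 2 ^ (k+1) = 2 ^ k * 2 := pow_succ 2 k

lemma one_le_two_pow (k : ℕ) : 1 ≤ 2 ^ k := Nat.one_le_two_pow

lemma NN_pos (k : ℕ) : 0 < NN k := by
  have h1 := two_pow_succ k
  have h2 := one_le_two_pow k
  simp only [NN]
  omega

def parent (c : Fin (NN k)) : Fin (NN k) :=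
  ⟨(c.1 - 1) / 2, lt_of_le_of_lt (le_trans (Nat.div_le_self _ _) (Nat.sub_le _ _)) c.2⟩

lemma parent_lt (c : Fin (NN k)) (hc : c.1 ≠ 0) : (parent c).1 < c.1 := by
  simp only [parent]; omega

lemma binTree_adj (a b : Fin (NN k)) :
    (binTree k).Adj a b ↔
      (b.1 ≠ 0 ∧ a = parent b) ∨ (a.1 ≠ 0 ∧ b = parent a) := by
  rw [binTree, SimpleGraph.fromRel_adj]
  constructor
  · rintro ⟨hne, h | h⟩
    · left
      rcases h with h | h
      all_goals
        refine ⟨by omega, ?_⟩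
        apply Fin.ext
        simp only [parent]
        omega
    · right
      rcases h with h | h
      all_goals
        refine ⟨by omega, ?_⟩
        apply Fin.ext
        simp only [parent]
        omega
  · rintro (⟨hb, rfl⟩ | ⟨ha, rfl⟩)
    · have h2 := b.2
      constructor
      · intro h
        have := congrArg Fin.val h
        simp only [parent] at this
        omega
      · left
        simp only [parent]
        omega
    · have h2 := a.2
      constructor
      · intro h
        have := congrArg Fin.val h
        simp only [parent] at this
        omega
      · right
        simp only [parent]
        omega

end MBIproof

namespace MBIproof

variable {k : ℕ}

def MC (VL : Finset (Fin (NN k))) : Finset (Fin (NN k)) :=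
  Finset.univ.filter (fun c => c.1 ≠ 0 ∧ c ∈ VL ∧ parent c ∈ VL)

lemma mem_MC {VL : Finset (Fin (NN k))} {c : Fin (NN k)} :
    c ∈ MC VL ↔ c.1 ≠ 0 ∧ c ∈ VL ∧ parent c ∈ VL := by
  simp [MC]

lemma adj_parent (c : Fin (NN k)) (hc : c.1 ≠ 0) : (binTree k).Adj (parent c) c :=
  (binTree_adj _ _).2 (Or.inl ⟨hc, rfl⟩)

lemma mbScore_set_eq (VL : Finset (Fin (NN k))) :
    {e ∈ (binTree k).edgeSet | ∀ w ∈ e, w ∈ VL} =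
      ↑((MC VL).image (fun c => s(parent c, c))) := by
  ext e
  induction e using Sym2.ind with
  | _ a b =>
    simp only [Set.mem_setOf_eq, SimpleGraph.mem_edgeSet, Finset.coe_image, Set.mem_image,
      Finset.mem_coe, mem_MC, Sym2.mem_iff]
    constructor
    · rintro ⟨hadj, hall⟩
      rcases (binTree_adj a b).1 hadj with ⟨hb, rfl⟩ | ⟨ha, rfl⟩
      · exact ⟨b, ⟨hb, hall b (Or.inr rfl), hall _ (Or.inl rfl)⟩, rfl⟩
      · exact ⟨a, ⟨ha, hall a (Or.inl rfl), hall _ (Or.inr rfl)⟩, Sym2.eq_swap⟩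
    · rintro ⟨c, ⟨hc0, hcL, hpL⟩, hce⟩
      rcases Sym2.eq_iff.1 hce with ⟨h1, h2⟩ | ⟨h1, h2⟩
      · subst h1; subst h2
        exact ⟨adj_parent c hc0, by rintro w (rfl | rfl) <;> assumption⟩
      · subst h1; subst h2
        exact ⟨((binTree k).adj_symm (adj_parent c hc0)), by rintro w (rfl | rfl) <;> assumption⟩

lemma mbScore_eq (VL VR : Finset (Fin (NN k))) :
    mbScore (binTree k) VL VR = ((MC VL).card : ℤ) := by
  rw [mbScore, mbScore_set_eq VL, Set.ncard_coe_finset,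
    Finset.card_image_of_injOn]
  intro c hc c' hc' hee
  rcases Sym2.eq_iff.1 hee with ⟨h1, h2⟩ | ⟨h1, h2⟩
  · exact h2
  · exfalso
    have l1 := parent_lt c (mem_MC.1 hc).1
    have l2 := parent_lt c' (mem_MC.1 hc').1
    have e1 := congrArg Fin.val h1
    have e2 := congrArg Fin.val h2
    omega

end MBIproof

namespace MBIproof

variable {k : ℕ}

lemma NN_eq (k : ℕ) : NN k = 2 ^ k * 2 - 1 := by
  simp only [NN, two_pow_succ]

def partner (c : Fin (NN k)) : Fin (NN k) :=
  if h : c.1 % 2 = 1 then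
    ⟨c.1 + 1, by
      have h2 := c.2
      have h3 := NN_eq k
      have h4 := one_le_two_pow k
      omega⟩
  else
    ⟨c.1 - 1, lt_of_le_of_lt (Nat.sub_le _ _) c.2⟩

lemma partner_val (c : Fin (NN k)) :
    (partner c).1 = if c.1 % 2 = 1 then c.1 + 1 else c.1 - 1 := by
  simp only [partner]
  split_ifs <;> rfl

lemma partner_ne_zero (c : Fin (NN k)) (hc : c.1 ≠ 0) : (partner c).1 ≠ 0 := by
  rw [partner_val]; split_ifs <;> omega

lemma partner_partner (c : Fin (NN k)) (hc : c.1 ≠ 0) : partner (partner c) = c := by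
  apply Fin.ext
  rw [partner_val, partner_val]
  split_ifs with h1 h2 h3 <;> omega

lemma partner_odd (c : Fin (NN k)) (h : c.1 % 2 = 1) : (partner c).1 = c.1 + 1 := by
  rw [partner_val, if_pos h]

def root (k : ℕ) : Fin (NN k) := ⟨0, NN_pos k⟩

/-- the chosen Maker child of an internal Maker vertex -/
def chooseChild (VL : Finset (Fin (NN k))) (v : Fin (NN k)) : Fin (NN k) :=
  if h : 2 * v.1 + 2 < NN k then
    (if (⟨2 * v.1 + 1, by omega⟩ : Fin (NN k)) ∈ VL then ⟨2 * v.1 + 1, by omega⟩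
     else ⟨2 * v.1 + 2, h⟩)
  else v

lemma chooseChild_spec (VL : Finset (Fin (NN k))) (v : Fin (NN k))
    (hint : 2 * v.1 + 2 < NN k)
    (hcov : ∀ c : Fin (NN k), c.1 ≠ 0 → (c ∈ VL ∨ partner c ∈ VL)) :
    (chooseChild VL v).1 ≠ 0 ∧ chooseChild VL v ∈ VL ∧ parent (chooseChild VL v) = v := by
  simp only [chooseChild, dif_pos hint]
  split_ifs with h1
  · exact ⟨by simp only [Fin.val_mk]; omega, h1,
      by apply Fin.ext; simp only [parent, Fin.val_mk]; omega⟩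
  · refine ⟨by simp only [Fin.val_mk]; omega, ?_,
      by apply Fin.ext; simp only [parent, Fin.val_mk]; omega⟩
    rcases hcov ⟨2 * v.1 + 1, by omega⟩ (by simp only [Fin.val_mk]; omega) with h | h
    · exact absurd h h1
    · have hv : (partner (⟨2 * v.1 + 1, by omega⟩ : Fin (NN k))) =
          (⟨2 * v.1 + 2, hint⟩ : Fin (NN k)) := by
        apply Fin.ext
        rw [partner_odd _ (by simp only [Fin.val_mk]; omega)]
      rwa [hv] at h

/-- Internal Maker vertices -/
def IntVL (VL : Finset (Fin (NN k))) : Finset (Fin (NN k)) :=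
  Finset.univ.filter (fun v => v.1 < 2 ^ k - 1 ∧ v ∈ VL)

lemma card_IntVL_le_MC (VL : Finset (Fin (NN k)))
    (hcov : ∀ c : Fin (NN k), c.1 ≠ 0 → (c ∈ VL ∨ partner c ∈ VL)) :
    (IntVL VL).card ≤ (MC VL).card := by
  apply Finset.card_le_card_of_injOn (chooseChild VL)
  · intro v hv
    simp only [IntVL, Finset.mem_coe, Finset.mem_filter, Finset.mem_univ, true_and] at hv
    have hint : 2 * v.1 + 2 < NN k := by
      have h1 := NN_eq k
      have h2 := hv.1
      omega
    obtain ⟨h0, hL, hp⟩ := chooseChild_spec VL v hint hcov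
    exact mem_MC.2 ⟨h0, hL, by rw [hp]; exact hv.2⟩
  · intro v hv v' hv' he
    simp only [IntVL, Finset.coe_filter, Set.mem_setOf_eq, Finset.mem_univ, true_and] at hv hv'
    have hint : 2 * v.1 + 2 < NN k := by have h1 := NN_eq k; have h2 := hv.1; omega
    have hint' : 2 * v'.1 + 2 < NN k := by have h1 := NN_eq k; have h2 := hv'.1; omega
    have h1 := (chooseChild_spec VL v hint hcov).2.2
    have h2 := (chooseChild_spec VL v' hint' hcov).2.2
    rw [← h1, ← h2, he]

end MBIproof

namespace MBIproof

/-- total-function version of pair representative -/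
def gg {k : ℕ} (VL : Finset (Fin (NN k))) (p : ℕ) : Fin (NN k) :=
  if h : p < NN k then chooseChild VL ⟨p, h⟩ else root k

lemma card_IntVL_ge (m : ℕ) (VL : Finset (Fin (NN (m+1))))
    (hcov : ∀ c : Fin (NN (m+1)), c.1 ≠ 0 → (c ∈ VL ∨ partner c ∈ VL)) :
    2 ^ m - 1 + (if root (m+1) ∈ VL then 1 else 0) ≤ (IntVL VL).card := by
  have hNN := NN_eq (m+1)
  have hpow := two_pow_succ m
  have hpos := one_le_two_pow m
  have hmem : ∀ p ∈ Finset.range (2 ^ m - 1), gg VL p ∈ IntVL VL ∧ (gg VL p).1 ≠ 0 ∧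
      (parent (gg VL p)).1 = p := by
    intro p hp
    rw [Finset.mem_range] at hp
    have hplt : p < NN (m+1) := by omega
    have hint : 2 * (⟨p, hplt⟩ : Fin (NN (m+1))).1 + 2 < NN (m+1) := by
      simp only [Fin.val_mk]; omega
    obtain ⟨h0, hL, hpar⟩ := chooseChild_spec VL ⟨p, hplt⟩ hint hcov
    have hgg : gg VL p = chooseChild VL ⟨p, hplt⟩ := dif_pos hplt
    have hparval : (parent (chooseChild VL ⟨p, hplt⟩)).1 = p := by rw [hpar]
    have hvalbound : (chooseChild VL ⟨p, hplt⟩).1 ≤ 2 * p + 2 := by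
      have := hparval
      simp only [parent, Fin.val_mk] at this
      omega
    refine ⟨?_, by rw [hgg]; exact h0, by rw [hgg]; exact hparval⟩
    rw [hgg]
    simp only [IntVL, Finset.mem_filter, Finset.mem_univ, true_and]
    exact ⟨by omega, hL⟩
  have hinj : Set.InjOn (gg VL) (Finset.range (2 ^ m - 1)) := by
    intro p hp q hq he
    have h1 := (hmem p hp).2.2
    have h2 := (hmem q hq).2.2
    rw [he] at h1; omega
  have hcard : ((Finset.range (2 ^ m - 1)).image (gg VL)).card = 2 ^ m - 1 := by
    rw [Finset.card_image_of_injOn (by exact_mod_cast hinj), Finset.card_range]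
  have hsub : (Finset.range (2 ^ m - 1)).image (gg VL) ⊆ IntVL VL := by
    intro x hx
    obtain ⟨p, hp, rfl⟩ := Finset.mem_image.1 hx
    exact (hmem p hp).1
  by_cases hroot : root (m+1) ∈ VL
  · rw [if_pos hroot]
    have hrootInt : root (m+1) ∈ IntVL VL := by
      simp only [IntVL, Finset.mem_filter, Finset.mem_univ, true_and, root]
      exact ⟨by omega, hroot⟩
    have hrne : root (m+1) ∉ (Finset.range (2 ^ m - 1)).image (gg VL) := by
      intro hcon
      obtain ⟨p, hp, he⟩ := Finset.mem_image.1 hcon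
      have := (hmem p hp).2.1
      rw [he] at this
      exact this rfl
    have : insert (root (m+1)) ((Finset.range (2 ^ m - 1)).image (gg VL)) ⊆ IntVL VL :=
      Finset.insert_subset hrootInt hsub
    have hc := Finset.card_le_card this
    rw [Finset.card_insert_of_notMem hrne, hcard] at hc
    omega
  · rw [if_neg hroot]
    have hc := Finset.card_le_card hsub
    rw [hcard] at hc
    omega

lemma final_score (m : ℕ) (VL VR : Finset (Fin (NN (m+1))))
    (hcov : ∀ c : Fin (NN (m+1)), c.1 ≠ 0 → (c ∈ VL ∨ partner c ∈ VL)) :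
    (2 ^ m - 1 : ℤ) + (if root (m+1) ∈ VL then 1 else 0) ≤ mbScore (binTree (m+1)) VL VR := by
  rw [mbScore_eq]
  have hle : 2 ^ m - 1 + (if root (m+1) ∈ VL then 1 else 0) ≤ (MC VL).card :=
    le_trans (card_IntVL_ge m VL hcov) (card_IntVL_le_MC VL hcov)
  have hpos := one_le_two_pow m
  have hcast : ((2:ℤ)) ^ m = ((2 ^ m : ℕ) : ℤ) := by push_cast; ring
  rw [hcast]
  split_ifs at hle ⊢ with h <;> omega

end MBIproof

namespace MBIproof

lemma partner_ne (c : Fin (NN k)) (hc : c.1 ≠ 0) : partner c ≠ c := by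
  intro h
  have := congrArg Fin.val h
  rw [partner_val] at this
  split_ifs at this <;> omega

lemma mem_free_iff {VL VR : Finset (Fin (NN k))} {c : Fin (NN k)} :
    c ∈ (VL ∪ VR)ᶜ ↔ c ∉ VL ∧ c ∉ VR := by
  simp [Finset.mem_compl]

/-- Maker's pairing-strategy lower bound, Breaker to move. -/
lemma LB (m : ℕ) : ∀ (N : ℕ) (VL VR : Finset (Fin (NN (m+1)))),
    ((VL ∪ VR)ᶜ).card = N → Disjoint VL VR →
    (∀ c ∈ VR, c.1 ≠ 0 → partner c ∈ VL) →
    (2 ^ m - 1 : ℤ) + (if root (m+1) ∈ VL then 1 else 0) ≤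
      gameValue (mbScore (binTree (m+1))) false VL VR := by
  intro N
  induction N using Nat.strong_induction_on with
  | _ N IH =>
    intro VL VR hN hdisj hinv
    by_cases hterm : (VL ∪ VR)ᶜ = (∅ : Finset (Fin (NN (m+1))))
    · rw [gv_terminal _ _ _ hterm]
      apply final_score
      intro c hc0
      have hmem : c ∈ VL ∪ VR := by
        by_contra hcon
        exact (Finset.eq_empty_iff_forall_notMem.1 hterm c) (Finset.mem_compl.2 hcon)
      rcases Finset.mem_union.1 hmem with h | h
      · exact Or.inl h
      · exact Or.inr (hinv c h hc0)
    · apply le_gv_false _ _ _ hterm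
      intro v hv
      have hvfree := mem_free_iff.1 hv
      -- key fact: if partner v is not free and v ≠ 0, then partner v ∈ VL
      have hpartner : v.1 ≠ 0 → partner v ∉ (VL ∪ (insert v VR))ᶜ → partner v ∈ VL := by
        intro hv0 hnf
        have h1 : partner v ∈ VL ∪ insert v VR := by
          by_contra hcon
          exact hnf (Finset.mem_compl.2 hcon)
        rcases Finset.mem_union.1 h1 with h | h
        · exact h
        · rcases Finset.mem_insert.1 h with h | h
          · exact absurd h (partner_ne v hv0)
          · have := hinv (partner v) h (partner_ne_zero v hv0)
            rw [partner_partner v hv0] at this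
            exact absurd this hvfree.1
      by_cases hterm2 : (VL ∪ (insert v VR))ᶜ = (∅ : Finset (Fin (NN (m+1))))
      · rw [gv_terminal _ _ _ hterm2]
        apply final_score
        intro c hc0
        have hmem : c ∈ VL ∪ insert v VR := by
          by_contra hcon
          exact (Finset.eq_empty_iff_forall_notMem.1 hterm2 c) (Finset.mem_compl.2 hcon)
        rcases Finset.mem_union.1 hmem with h | h
        · exact Or.inl h
        · rcases Finset.mem_insert.1 h with rfl | h
          · exact Or.inr (hpartner hc0 (by rw [hterm2]; exact Finset.notMem_empty _))
          · exact Or.inr (hinv c h hc0)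
      · -- Maker responds with u
        have hfne : ((VL ∪ (insert v VR))ᶜ).Nonempty := Finset.nonempty_iff_ne_empty.2 hterm2
        -- choose u : partner v if allowed, else arbitrary
        obtain ⟨u, hu, hugood⟩ :
            ∃ u ∈ (VL ∪ (insert v VR))ᶜ,
              (v.1 ≠ 0 → partner v ∈ (VL ∪ (insert v VR))ᶜ → u = partner v) := by
          by_cases hcase : v.1 ≠ 0 ∧ partner v ∈ (VL ∪ (insert v VR))ᶜ
          · exact ⟨partner v, hcase.2, fun _ _ => rfl⟩
          · obtain ⟨u, hu⟩ := hfne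
            refine ⟨u, hu, fun h1 h2 => absurd ⟨h1, h2⟩ hcase⟩
        refine le_trans ?_ (le_gv_true _ _ _ hterm2 u hu)
        have hufree := mem_free_iff.1 hu
        have huVR : u ∉ insert v VR := hufree.2
        -- apply IH
        have hcard1 : v ∈ (VL ∪ VR)ᶜ := hv
        have hstep1 : (VL ∪ (insert v VR))ᶜ = ((VL ∪ VR)ᶜ).erase v := by
          rw [Finset.union_insert, Finset.compl_insert]
        have hstep2 : ((insert u VL) ∪ (insert v VR))ᶜ = (((VL ∪ VR)ᶜ).erase v).erase u := by
          rw [Finset.insert_union, Finset.compl_insert, hstep1]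
        have hlt : ((((VL ∪ VR)ᶜ).erase v).erase u).card < N := by
          have h1 : u ∈ ((VL ∪ VR)ᶜ).erase v := by rw [← hstep1]; exact hu
          have h2 := Finset.card_erase_lt_of_mem h1
          have h3 := Finset.card_erase_lt_of_mem hcard1
          omega
        have hdisj2 : Disjoint (insert u VL) (insert v VR) := by
          rw [Finset.disjoint_insert_left]
          refine ⟨huVR, ?_⟩
          rw [Finset.disjoint_insert_right]
          exact ⟨hvfree.1, hdisj⟩
        have hinv2 : ∀ c ∈ insert v VR, c.1 ≠ 0 → partner c ∈ insert u VL := by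
          intro c hc hc0
          rcases Finset.mem_insert.1 hc with rfl | hc
          · by_cases hpf : partner c ∈ (VL ∪ (insert c VR))ᶜ
            · rw [hugood hc0 hpf]; exact Finset.mem_insert_self _ _
            · exact Finset.mem_insert_of_mem (hpartner hc0 hpf)
          · exact Finset.mem_insert_of_mem (hinv c hc hc0)
        have := IH _ hlt (insert u VL) (insert v VR) (by rw [hstep2]) hdisj2 hinv2
        refine le_trans ?_ this
        have hmono : (if root (m+1) ∈ VL then (1:ℤ) else 0) ≤
            (if root (m+1) ∈ insert u VL then (1:ℤ) else 0) := by
          split_ifs with h1 h2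
          · exact le_refl 1
          · exact absurd (Finset.mem_insert_of_mem h1) h2
          · norm_num
          · exact le_refl 0
        omega

end MBIproof

namespace MBIproof

lemma univ_compl_ne (k : ℕ) : ((∅ ∪ ∅ : Finset (Fin (NN k))))ᶜ ≠ ∅ := by
  simp only [Finset.empty_union, Finset.compl_empty]
  intro h
  have := Finset.card_univ (α := Fin (NN k))
  rw [h] at this
  simp only [Finset.card_empty, Fintype.card_fin] at this
  have := NN_pos k
  omega

lemma Ls_lower (m : ℕ) : (2 ^ m : ℤ) ≤ LsMB (binTree (m+1)) := by
  rw [LsMB]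
  have hne := univ_compl_ne (m+1)
  have hroot : root (m+1) ∈ ((∅ ∪ ∅ : Finset (Fin (NN (m+1)))))ᶜ := by
    simp
  refine le_trans ?_ (le_gv_true _ _ _ hne (root (m+1)) hroot)
  have := LB m _ (insert (root (m+1)) ∅) ∅ rfl (by simp) (by simp)
  rw [if_pos (Finset.mem_insert_self _ _)] at this
  linarith

lemma Rs_lower (m : ℕ) : (2 ^ m - 1 : ℤ) ≤ RsMB (binTree (m+1)) := by
  rw [RsMB]
  have := LB m _ (∅ : Finset (Fin (NN (m+1)))) ∅ rfl (by simp) (by simp)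
  rw [if_neg (Finset.notMem_empty _)] at this
  linarith

/-! ### Erdős–Selfridge-type upper bound -/

variable {k : ℕ}

def fL (VL : Finset (Fin (NN k))) (x : Fin (NN k)) : ℤ := if x ∈ VL then 2 else 1

def alive (VR : Finset (Fin (NN k))) : Finset (Fin (NN k)) :=
  Finset.univ.filter (fun c => c.1 ≠ 0 ∧ c ∉ VR ∧ parent c ∉ VR)

def Phi (VL VR : Finset (Fin (NN k))) : ℤ :=
  ∑ c ∈ alive VR, fL VL (parent c) * fL VL c

def w4 (VL VR : Finset (Fin (NN k))) (u : Fin (NN k)) : ℤ :=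
  ∑ c ∈ (alive VR).filter (fun c => c = u ∨ parent c = u), fL VL (parent c) * fL VL c

lemma fL_pos (VL : Finset (Fin (NN k))) (x : Fin (NN k)) : 1 ≤ fL VL x := by
  rw [fL]; split_ifs <;> omega

lemma term_nonneg (VL : Finset (Fin (NN k))) (x y : Fin (NN k)) : 0 ≤ fL VL x * fL VL y :=
  mul_nonneg (le_trans zero_le_one (fL_pos VL x)) (le_trans zero_le_one (fL_pos VL y))

lemma w4_nonneg (VL VR : Finset (Fin (NN k))) (u : Fin (NN k)) : 0 ≤ w4 VL VR u :=
  Finset.sum_nonneg (fun c _ => term_nonneg VL _ _)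

lemma fL_insert (VL : Finset (Fin (NN k))) (u x : Fin (NN k)) (hu : u ∉ VL) :
    fL (insert u VL) x = if x = u then 2 * fL VL x else fL VL x := by
  simp only [fL, Finset.mem_insert]
  by_cases hxu : x = u
  · subst hxu
    rw [if_pos (Or.inl rfl), if_pos rfl, if_neg hu]; norm_num
  · rw [if_neg hxu]
    by_cases hxL : x ∈ VL
    · rw [if_pos (Or.inr hxL), if_pos hxL]
    · rw [if_neg (by tauto), if_neg hxL]

lemma mem_alive {VR : Finset (Fin (NN k))} {c : Fin (NN k)} :
    c ∈ alive VR ↔ c.1 ≠ 0 ∧ c ∉ VR ∧ parent c ∉ VR := by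
  simp [alive]

lemma Phi_insert_L (VL VR : Finset (Fin (NN k))) (u : Fin (NN k)) (hu : u ∉ VL) :
    Phi (insert u VL) VR = Phi VL VR + w4 VL VR u := by
  have key : ∀ c ∈ alive VR,
      fL (insert u VL) (parent c) * fL (insert u VL) c =
        fL VL (parent c) * fL VL c +
          (if c = u ∨ parent c = u then fL VL (parent c) * fL VL c else 0) := by
    intro c hc
    have hc0 := (mem_alive.1 hc).1
    have hlt := parent_lt c hc0
    have hne : parent c ≠ c := by intro h; rw [h] at hlt; omega
    rw [fL_insert VL u _ hu, fL_insert VL u _ hu]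
    by_cases h1 : c = u
    · have h2 : ¬ (parent c = u) := by rw [← h1]; exact hne
      rw [if_pos h1, if_neg h2, if_pos (Or.inl h1)]
      ring
    · by_cases h2 : parent c = u
      · rw [if_pos h2, if_neg h1, if_pos (Or.inr h2)]
        ring
      · rw [if_neg h1, if_neg h2, if_neg (by tauto)]
        ring
  rw [Phi, Finset.sum_congr rfl key, Finset.sum_add_distrib]
  congr 1
  rw [w4, Finset.sum_filter]

lemma alive_insert (VR : Finset (Fin (NN k))) (v : Fin (NN k)) :
    alive (insert v VR) = (alive VR).filter (fun c => ¬(c = v ∨ parent c = v)) := by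
  ext c
  simp only [mem_alive, Finset.mem_filter, Finset.mem_insert, not_or, mem_alive]
  tauto

lemma Phi_insert_R (VL VR : Finset (Fin (NN k))) (v : Fin (NN k)) :
    Phi VL (insert v VR) = Phi VL VR - w4 VL VR v := by
  have hsplit := Finset.sum_filter_add_sum_filter_not (alive VR)
    (fun c => c = v ∨ parent c = v) (fun c => fL VL (parent c) * fL VL c)
  rw [Phi, alive_insert]
  rw [Phi, ← hsplit, w4]
  ring

lemma w4_insert_R_le (VL VR : Finset (Fin (NN k))) (v u : Fin (NN k)) :
    w4 VL (insert v VR) u ≤ w4 VL VR u := by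
  apply Finset.sum_le_sum_of_subset_of_nonneg
  · apply Finset.filter_subset_filter
    rw [alive_insert]
    exact Finset.filter_subset _ _
  · intro c _ _
    exact term_nonneg VL _ _

lemma Phi_terminal (VL VR : Finset (Fin (NN k))) (hterm : (VL ∪ VR)ᶜ = (∅ : Finset (Fin (NN k))))
    (hdisj : Disjoint VL VR) :
    Phi VL VR = 4 * ((MC VL).card : ℤ) := by
  have hmem : ∀ x : Fin (NN k), x ∉ VR ↔ x ∈ VL := by
    intro x
    constructor
    · intro hx
      have : x ∈ VL ∪ VR := by
        by_contra hcon
        exact (Finset.eq_empty_iff_forall_notMem.1 hterm x) (Finset.mem_compl.2 hcon)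
      rcases Finset.mem_union.1 this with h | h
      · exact h
      · exact absurd h hx
    · intro hx hx2
      exact (Finset.disjoint_left.1 hdisj) hx hx2
  have halive : alive VR = MC VL := by
    ext c
    rw [mem_alive, mem_MC, hmem, hmem]
  rw [Phi, halive]
  have : ∀ c ∈ MC VL, fL VL (parent c) * fL VL c = 4 := by
    intro c hc
    obtain ⟨h0, h1, h2⟩ := mem_MC.1 hc
    rw [fL, fL, if_pos h1, if_pos h2]; norm_num
  rw [Finset.sum_congr rfl this, Finset.sum_const, nsmul_eq_mul]
  ring

end MBIproof

namespace MBIproof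

variable {k : ℕ}

lemma UB : ∀ (N : ℕ) (VL VR : Finset (Fin (NN k))),
    ((VL ∪ VR)ᶜ).card = N → Disjoint VL VR →
    (4 * gameValue (mbScore (binTree k)) false VL VR ≤ Phi VL VR) ∧
    (∀ B : ℤ, 0 ≤ B → (∀ u ∈ (VL ∪ VR)ᶜ, w4 VL VR u ≤ B) →
      4 * gameValue (mbScore (binTree k)) true VL VR ≤ Phi VL VR + B) := by
  intro N
  induction N using Nat.strong_induction_on with
  | _ N IH =>
    intro VL VR hN hdisj
    by_cases hterm : (VL ∪ VR)ᶜ = (∅ : Finset (Fin (NN k)))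
    · have hsc : 4 * mbScore (binTree k) VL VR = Phi VL VR := by
        rw [mbScore_eq, Phi_terminal VL VR hterm hdisj]
      constructor
      · rw [gv_terminal _ _ _ hterm, hsc]
      · intro B hB _
        rw [gv_terminal _ _ _ hterm, hsc]
        omega
    · have hne : ((VL ∪ VR)ᶜ).Nonempty := Finset.nonempty_iff_ne_empty.2 hterm
      constructor
      · -- Breaker to move: pick max-weight vertex
        obtain ⟨vs, hvs, hvmax⟩ := Finset.exists_max_image ((VL ∪ VR)ᶜ) (w4 VL VR) hne
        have hstep := gv_false_le (mbScore (binTree k)) VL VR hterm vs hvs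
        have hvsfree := mem_free_iff.1 hvs
        have hcard : (((VL ∪ VR)ᶜ).erase vs).card < N := by
          have := Finset.card_erase_lt_of_mem hvs
          omega
        have hstep1 : (VL ∪ (insert vs VR))ᶜ = ((VL ∪ VR)ᶜ).erase vs := by
          rw [Finset.union_insert, Finset.compl_insert]
        have hdisj2 : Disjoint VL (insert vs VR) := by
          rw [Finset.disjoint_insert_right]
          exact ⟨hvsfree.1, hdisj⟩
        have hIH := (IH _ hcard VL (insert vs VR) (by rw [hstep1]) hdisj2).2
          (w4 VL VR vs) (w4_nonneg _ _ _)
          (by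
            intro u hu
            have hu2 : u ∈ (VL ∪ VR)ᶜ := by
              rw [hstep1] at hu
              exact Finset.mem_of_mem_erase hu
            exact le_trans (w4_insert_R_le VL VR vs u) (hvmax u hu2))
        rw [Phi_insert_R] at hIH
        have : 4 * gameValue (mbScore (binTree k)) true VL (insert vs VR) ≤ Phi VL VR := by
          omega
        omega
      · -- Maker to move
        intro B hB hBmax
        rw [gv_true_nonterminal _ _ _ hterm]
        obtain ⟨u0, _, hequ⟩ := Finset.exists_mem_eq_sup'
          (Finset.attach_nonempty_iff.mpr hne)
          (fun v => gameValue (mbScore (binTree k)) false (insert v.1 VL) VR)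
        rw [hequ]
        have hufree := mem_free_iff.1 u0.2
        have hcard : (((VL ∪ VR)ᶜ).erase u0.1).card < N := by
          have := Finset.card_erase_lt_of_mem u0.2
          omega
        have hstep1 : ((insert u0.1 VL) ∪ VR)ᶜ = ((VL ∪ VR)ᶜ).erase u0.1 := by
          rw [Finset.insert_union, Finset.compl_insert]
        have hdisj2 : Disjoint (insert u0.1 VL) VR := by
          rw [Finset.disjoint_insert_left]
          exact ⟨hufree.2, hdisj⟩
        have hIH := (IH _ hcard (insert u0.1 VL) VR (by rw [hstep1]) hdisj2).1
        rw [Phi_insert_L VL VR u0.1 hufree.1] at hIH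
        have := hBmax u0.1 u0.2
        omega

end MBIproof

namespace MBIproof

variable {k : ℕ}

lemma alive_empty : alive (∅ : Finset (Fin (NN k))) =
    Finset.univ.filter (fun c => c.1 ≠ 0) := by
  ext c
  simp [mem_alive]

lemma card_nonroot : (Finset.univ.filter (fun c : Fin (NN k) => c.1 ≠ 0)).card = NN k - 1 := by
  have he : Finset.univ.filter (fun c : Fin (NN k) => c.1 ≠ 0) =
      Finset.univ.erase (root k) := by
    ext c
    simp only [Finset.mem_filter, Finset.mem_univ, true_and, Finset.mem_erase, and_true]
    constructor
    · intro h hc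
      rw [hc] at h
      exact h rfl
    · intro h
      intro hval
      exact h (Fin.ext hval)
  rw [he, Finset.card_erase_of_mem (Finset.mem_univ _), Finset.card_univ, Fintype.card_fin]

lemma Phi_empty : Phi (∅ : Finset (Fin (NN k))) ∅ = (NN k : ℤ) - 1 := by
  rw [Phi, alive_empty]
  have : ∀ c ∈ Finset.univ.filter (fun c : Fin (NN k) => c.1 ≠ 0),
      fL ∅ (parent c) * fL ∅ c = 1 := by
    intro c _
    simp [fL]
  rw [Finset.sum_congr rfl this, Finset.sum_const, nsmul_eq_mul, card_nonroot]
  have := NN_pos k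
  push_cast [Nat.cast_sub (by omega : 1 ≤ NN k)]
  ring

lemma w4_empty_le (u : Fin (NN k)) : w4 (∅ : Finset (Fin (NN k))) ∅ u ≤ 3 := by
  rw [w4]
  have h1 : ∀ c ∈ (alive (∅ : Finset (Fin (NN k)))).filter (fun c => c = u ∨ parent c = u),
      fL ∅ (parent c) * fL ∅ c = 1 := by
    intro c _
    simp [fL]
  rw [Finset.sum_congr rfl h1, Finset.sum_const, nsmul_eq_mul, mul_one]
  have hsub : (alive (∅ : Finset (Fin (NN k)))).filter (fun c => c = u ∨ parent c = u) ⊆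
      Finset.univ.filter (fun c : Fin (NN k) =>
        c.1 = u.1 ∨ c.1 = 2 * u.1 + 1 ∨ c.1 = 2 * u.1 + 2) := by
    intro c hc
    obtain ⟨hc1, hc2⟩ := Finset.mem_filter.1 hc
    have hc0 := (mem_alive.1 hc1).1
    simp only [Finset.mem_filter, Finset.mem_univ, true_and]
    rcases hc2 with rfl | h
    · exact Or.inl rfl
    · have := congrArg Fin.val h
      simp only [parent, Fin.val_mk] at this
      omega
  have hcard : (Finset.univ.filter (fun c : Fin (NN k) =>
      c.1 = u.1 ∨ c.1 = 2 * u.1 + 1 ∨ c.1 = 2 * u.1 + 2)).card ≤ 3 := by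
    have hinj : Set.InjOn Fin.val (↑(Finset.univ.filter (fun c : Fin (NN k) =>
        c.1 = u.1 ∨ c.1 = 2 * u.1 + 1 ∨ c.1 = 2 * u.1 + 2)) : Set (Fin (NN k))) :=
      fun a _ b _ h => Fin.ext h
    have hmapsto : ∀ c ∈ Finset.univ.filter (fun c : Fin (NN k) =>
        c.1 = u.1 ∨ c.1 = 2 * u.1 + 1 ∨ c.1 = 2 * u.1 + 2),
        c.1 ∈ ({u.1, 2 * u.1 + 1, 2 * u.1 + 2} : Finset ℕ) := by
      intro c hc
      obtain ⟨-, h⟩ := Finset.mem_filter.1 hc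
      simp only [Finset.mem_insert, Finset.mem_singleton]
      tauto
    have := Finset.card_le_card_of_injOn Fin.val hmapsto hinj
    have h3 : ({u.1, 2 * u.1 + 1, 2 * u.1 + 2} : Finset ℕ).card ≤ 3 :=
      le_trans (Finset.card_insert_le _ _)
        (by
          have := Finset.card_insert_le (2 * u.1 + 1) ({2 * u.1 + 2} : Finset ℕ)
          simp only [Finset.card_singleton] at this ⊢
          omega)
    omega
  have := Finset.card_le_card hsub
  have hc2 := le_trans this hcard
  exact_mod_cast hc2

lemma Ls_upper (m : ℕ) : LsMB (binTree (m+1)) ≤ (2 ^ m : ℤ) := by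
  have hUB := (UB (k := m+1) _ ∅ ∅ rfl (by simp)).2 3 (by norm_num)
    (fun u _ => w4_empty_le u)
  rw [Phi_empty] at hUB
  unfold LsMB
  have hNN : (NN (m+1) : ℤ) = 4 * 2 ^ m - 1 := by
    rw [NN_eq]
    have h1 := one_le_two_pow (m+1)
    push_cast [Nat.cast_sub (by omega : 1 ≤ 2 ^ (m+1) * 2)]
    rw [show ((2:ℤ))^(m+1) = 2 * 2^m by ring]
    ring
  rw [hNN] at hUB
  set L := gameValue (mbScore (binTree (m+1))) true ∅ ∅
  set t := (2:ℤ)^m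
  have ht : 1 ≤ t := one_le_pow₀ (by norm_num)
  omega

lemma Rs_upper (m : ℕ) : RsMB (binTree (m+1)) ≤ (2 ^ m : ℤ) - 1 := by
  have hUB := (UB (k := m+1) _ ∅ ∅ rfl (by simp)).1
  rw [Phi_empty] at hUB
  unfold RsMB
  have hNN : (NN (m+1) : ℤ) = 4 * 2 ^ m - 1 := by
    rw [NN_eq]
    have h1 := one_le_two_pow (m+1)
    push_cast [Nat.cast_sub (by omega : 1 ≤ 2 ^ (m+1) * 2)]
    rw [show ((2:ℤ))^(m+1) = 2 * 2^m by ring]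
    ring
  rw [hNN] at hUB
  set R := gameValue (mbScore (binTree (m+1))) false ∅ ∅
  set t := (2:ℤ)^m
  omega

end MBIproof


/-- On the complete binary tree of depth `k ≥ 1`, the Maker-Breaker
Incidence values are `Ls(T_k) = 2^{k-1}` and `Rs(T_k) = 2^{k-1} - 1`. -/
theorem makerBreaker_incidence_complete_binary_tree (k : ℕ) (hk : 1 ≤ k) :
    LsMB (binTree k) = (2 : ℤ) ^ (k - 1) ∧
    RsMB (binTree k) = (2 : ℤ) ^ (k - 1) - 1 := by
  obtain ⟨m, rfl⟩ : ∃ m, k = m + 1 := ⟨k - 1, by omega⟩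
  rw [show m + 1 - 1 = m from rfl]
  exact ⟨le_antisymm (MBIproof.Ls_upper m) (MBIproof.Ls_lower m),
    le_antisymm (MBIproof.Rs_upper m) (by have := MBIproof.Rs_lower m; omega)⟩
end

section
/- In Maker-Breaker Incidence, the small-path values are: Ls(P_1)=0, Ls(P_2)=0, Ls(P_3)=1, Ls(P_4)=1, Ls(P_5)=1, Ls(P_6)=1, Ls(P_7)=1, and Rs(P_1)=Rs(P_2)=Rs(P_3)=Rs(P_4)=Rs(P_5)=0, Rs(P_6)=Rs(P_7)=1. -/
open Finset

/-! Auxiliary list-based minimax machinery. -/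

def listMax : ℤ → List ℤ → ℤ
  | acc, [] => acc
  | acc, x :: xs => listMax (max acc x) xs

def listMin : ℤ → List ℤ → ℤ
  | acc, [] => acc
  | acc, x :: xs => listMin (min acc x) xs

theorem listMax_le {b : ℤ} : ∀ {acc l}, acc ≤ b → (∀ x ∈ l, x ≤ b) → listMax acc l ≤ b
  | _, [], h1, _ => h1
  | _, _ :: _, h1, h2 => by
    rw [listMax]
    exact listMax_le (max_le h1 (h2 _ (by simp))) (fun y hy => h2 y (by simp [hy]))

theorem le_listMax_left : ∀ {acc l}, acc ≤ listMax acc l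
  | _, [] => le_refl _
  | _, _ :: _ => by rw [listMax]; exact le_trans (le_max_left _ _) le_listMax_left

theorem le_listMax_of_mem : ∀ {acc l x}, x ∈ l → x ≤ listMax acc l
  | _, y :: ys, x, h => by
    rw [listMax]
    rcases List.mem_cons.mp h with h | h
    · subst h; exact le_trans (le_max_right _ _) le_listMax_left
    · exact le_listMax_of_mem h

theorem le_listMin {b : ℤ} : ∀ {acc l}, b ≤ acc → (∀ x ∈ l, b ≤ x) → b ≤ listMin acc l
  | _, [], h1, _ => h1
  | _, _ :: _, h1, h2 => by
    rw [listMin]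
    exact le_listMin (le_min h1 (h2 _ (by simp))) (fun y hy => h2 y (by simp [hy]))

theorem listMin_le_left : ∀ {acc l}, listMin acc l ≤ acc
  | _, [] => le_refl _
  | _, _ :: _ => by rw [listMin]; exact le_trans listMin_le_left (min_le_left _ _)

theorem listMin_le_of_mem : ∀ {acc l x}, x ∈ l → listMin acc l ≤ x
  | _, y :: ys, x, h => by
    rw [listMin]
    rcases List.mem_cons.mp h with h | h
    · subst h; exact le_trans listMin_le_left (min_le_right _ _)
    · exact listMin_le_of_mem h

/-- List-based (kernel-computable) minimax for a VR-independent score. -/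
def gvL {V : Type} [DecidableEq V] (score : List V → ℤ) : ℕ → Bool → List V → List V → ℤ
  | 0, _, _, VL => score VL
  | _+1, _, [], VL => score VL
  | fuel+1, turn, f :: fs, VL =>
    if turn then
      listMax (gvL score fuel false fs (f :: VL))
        (fs.map fun v => gvL score fuel false (f :: fs.erase v) (v :: VL))
    else
      listMin (gvL score fuel true fs VL)
        (fs.map fun v => gvL score fuel true (f :: fs.erase v) VL)

theorem gvL_eq {V : Type} [Fintype V] [DecidableEq V]
    (scoreF : Finset V → Finset V → ℤ) (scoreL : List V → ℤ)
    (hscore : ∀ (l : List V) (VL VR : Finset V), l.toFinset = VL → scoreL l = scoreF VL VR) :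
    ∀ (fuel : ℕ) (turn : Bool) (free VLl : List V) (VL VR : Finset V),
      free.Nodup → free.toFinset = (VL ∪ VR)ᶜ → VLl.toFinset = VL → free.length ≤ fuel →
      gvL scoreL fuel turn free VLl = gameValue scoreF turn VL VR := by
  intro fuel
  induction fuel with
  | zero =>
    intro turn free VLl VL VR hnd hfree hVL hlen
    have hfe : free = [] := List.length_eq_zero_iff.mp (Nat.le_zero.mp hlen)
    subst hfe
    have hc : (VL ∪ VR)ᶜ = (∅ : Finset V) := by rw [← hfree]; rfl
    rw [gvL, gameValue]
    simp only [hc, dif_pos]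
    exact hscore _ _ _ hVL
  | succ fuel ih =>
    intro turn free VLl VL VR hnd hfree hVL hlen
    match free with
    | [] =>
      have hc : (VL ∪ VR)ᶜ = (∅ : Finset V) := by rw [← hfree]; rfl
      rw [gvL, gameValue]
      simp only [hc, dif_pos]
      exact hscore _ _ _ hVL
    | f :: fs =>
      have hf : f ∉ fs := (List.nodup_cons.mp hnd).1
      have hfs : fs.Nodup := (List.nodup_cons.mp hnd).2
      have hc : (VL ∪ VR)ᶜ ≠ (∅ : Finset V) := by
        rw [← hfree]
        intro h
        have : f ∈ (f :: fs).toFinset := by simp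
        rw [h] at this
        exact absurd this (Finset.notMem_empty f)
      have hmem : ∀ v, v ∈ f :: fs → v ∈ (VL ∪ VR)ᶜ := by
        intro v hv; rw [← hfree]; simpa using hv
      have hsub : ∀ v (l' : List V), v ∈ f :: fs → l'.Nodup →
          l'.toFinset = (VL ∪ VR)ᶜ.erase v → l'.length ≤ fuel →
          gvL scoreL fuel false l' (v :: VLl) = gameValue scoreF false (insert v VL) VR ∧
          gvL scoreL fuel true l' VLl = gameValue scoreF true VL (insert v VR) := by
        intro v l' hv h1 h2 h3
        constructor
        · apply ih false l' (v :: VLl) (insert v VL) VR h1 _ (by simp [hVL]) h3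
          rw [h2, Finset.insert_union, Finset.compl_insert]
        · apply ih true l' VLl VL (insert v VR) h1 _ hVL h3
          rw [h2, Finset.union_insert, Finset.compl_insert]
      have hfsinv : fs.toFinset = (VL ∪ VR)ᶜ.erase f := by
        rw [← hfree]
        ext x
        simp only [List.toFinset_cons, Finset.mem_erase, Finset.mem_insert, List.mem_toFinset]
        constructor
        · intro hx
          exact ⟨fun he => hf (he ▸ hx), Or.inr hx⟩
        · rintro ⟨hne, (rfl | hx)⟩
          · exact absurd rfl hne
          · exact hx
      have hlenfs : fs.length ≤ fuel := by
        have := hlen; simp only [List.length_cons] at this; omega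
      have herinv : ∀ v, v ∈ fs → (f :: fs.erase v).toFinset = (VL ∪ VR)ᶜ.erase v := by
        intro v hv
        rw [← hfree]
        ext x
        simp only [List.toFinset_cons, Finset.mem_erase, Finset.mem_insert, List.mem_toFinset,
          List.Nodup.mem_erase_iff hfs]
        constructor
        · rintro (rfl | ⟨hne, hx⟩)
          · exact ⟨fun he => hf (he ▸ hv), Or.inl rfl⟩
          · exact ⟨hne, Or.inr hx⟩
        · rintro ⟨hne, (rfl | hx)⟩
          · exact Or.inl rfl
          · exact Or.inr ⟨hne, hx⟩
      have hernd : ∀ v, v ∈ fs → (f :: fs.erase v).Nodup := by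
        intro v hv
        exact List.nodup_cons.mpr ⟨fun h => hf (List.mem_of_mem_erase h), List.Nodup.erase _ hfs⟩
      have herlen : ∀ v, v ∈ fs → (f :: fs.erase v).length ≤ fuel := by
        intro v hv
        simp only [List.length_cons, List.length_erase_of_mem hv]
        have hpos : 0 < fs.length := List.length_pos_iff.mpr (List.ne_nil_of_mem hv)
        omega
      have hneA : ((VL ∪ VR)ᶜ).attach.Nonempty :=
        Finset.attach_nonempty_iff.mpr (Finset.nonempty_iff_ne_empty.mpr hc)
      cases turn
      · -- Breaker to move : inf'
        rw [show gameValue scoreF false VL VR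
              = ((VL ∪ VR)ᶜ).attach.inf' hneA (fun v => gameValue scoreF true VL (insert v.1 VR))
            from by rw [gameValue]; rw [dif_neg hc]; rfl,
           show gvL scoreL (fuel+1) false (f :: fs) VLl
              = listMin (gvL scoreL fuel true fs VLl)
                  (fs.map fun v => gvL scoreL fuel true (f :: fs.erase v) VLl) from rfl]
        apply le_antisymm
        · refine Finset.le_inf' hneA _ fun b _ => ?_
          rcases List.mem_cons.mp (by simpa [← hfree] using b.2 : (b : V) ∈ f :: fs) with hb | hb
          · rw [hb, ← (hsub f fs (by simp) hfs hfsinv hlenfs).2]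
            exact listMin_le_left
          · rw [← (hsub b.1 (f :: fs.erase b.1) (by simp [hb]) (hernd _ hb) (herinv _ hb) (herlen _ hb)).2]
            exact listMin_le_of_mem (List.mem_map.mpr ⟨b.1, hb, rfl⟩)
        · apply le_listMin
          · rw [(hsub f fs (by simp) hfs hfsinv hlenfs).2]
            exact Finset.inf'_le (fun v : {x // x ∈ (VL ∪ VR)ᶜ} => gameValue scoreF true VL (insert v.1 VR)) (Finset.mem_attach _ ⟨f, hmem f (by simp)⟩)
          · intro x hx
            rcases List.mem_map.mp hx with ⟨v, hv, rfl⟩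
            rw [(hsub v (f :: fs.erase v) (by simp [hv]) (hernd _ hv) (herinv _ hv) (herlen _ hv)).2]
            exact Finset.inf'_le (fun v : {x // x ∈ (VL ∪ VR)ᶜ} => gameValue scoreF true VL (insert v.1 VR)) (Finset.mem_attach _ ⟨v, hmem v (by simp [hv])⟩)
      · -- Maker to move : sup'
        rw [show gameValue scoreF true VL VR
              = ((VL ∪ VR)ᶜ).attach.sup' hneA (fun v => gameValue scoreF false (insert v.1 VL) VR)
            from by rw [gameValue]; rw [dif_neg hc]; rfl,
           show gvL scoreL (fuel+1) true (f :: fs) VLl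
              = listMax (gvL scoreL fuel false fs (f :: VLl))
                  (fs.map fun v => gvL scoreL fuel false (f :: fs.erase v) (v :: VLl)) from rfl]
        apply le_antisymm
        · apply listMax_le
          · rw [(hsub f fs (by simp) hfs hfsinv hlenfs).1]
            exact Finset.le_sup' (fun v : {x // x ∈ (VL ∪ VR)ᶜ} => gameValue scoreF false (insert v.1 VL) VR) (Finset.mem_attach _ ⟨f, hmem f (by simp)⟩)
          · intro x hx
            rcases List.mem_map.mp hx with ⟨v, hv, rfl⟩
            rw [(hsub v (f :: fs.erase v) (by simp [hv]) (hernd _ hv) (herinv _ hv) (herlen _ hv)).1]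
            exact Finset.le_sup' (fun v : {x // x ∈ (VL ∪ VR)ᶜ} => gameValue scoreF false (insert v.1 VL) VR) (Finset.mem_attach _ ⟨v, hmem v (by simp [hv])⟩)
        · refine Finset.sup'_le hneA _ fun b _ => ?_
          rcases List.mem_cons.mp (by simpa [← hfree] using b.2 : (b : V) ∈ f :: fs) with hb | hb
          · rw [hb, ← (hsub f fs (by simp) hfs hfsinv hlenfs).1]
            exact le_listMax_left
          · rw [← (hsub b.1 (f :: fs.erase b.1) (by simp [hb]) (hernd _ hb) (herinv _ hb) (herlen _ hb)).1]
            exact le_listMax_of_mem (List.mem_map.mpr ⟨b.1, hb, rfl⟩)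

def scoreList {n : ℕ} (E : Finset (Sym2 (Fin n))) (l : List (Fin n)) : ℤ :=
  ((E.filter (fun e => ∀ w ∈ e, w ∈ l)).card : ℤ)

instance pathAdjDec (n : ℕ) : DecidableRel (SimpleGraph.pathGraph n).Adj := fun _ _ =>
  decidable_of_iff _ (SimpleGraph.pathGraph_adj).symm

theorem mbScore_path_eq (n : ℕ) (E : Finset (Sym2 (Fin n)))
    (hE : (SimpleGraph.pathGraph n).edgeFinset = E) :
    ∀ (l : List (Fin n)) (VL VR : Finset (Fin n)), l.toFinset = VL →
      scoreList E l = mbScore (SimpleGraph.pathGraph n) VL VR := by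
  subst hE
  intro l VL VR hl
  unfold mbScore scoreList
  have h1 : ({e ∈ (SimpleGraph.pathGraph n).edgeSet | ∀ w ∈ e, w ∈ VL} : Set (Sym2 (Fin n)))
      = ↑((SimpleGraph.pathGraph n).edgeFinset.filter (fun e => ∀ w ∈ e, w ∈ l)) := by
    ext e
    simp only [Set.mem_setOf_eq, Finset.coe_filter, SimpleGraph.mem_edgeFinset, ← hl,
      List.mem_toFinset]
  rw [h1, Set.ncard_coe_finset]

theorem LsMB_path (n : ℕ) (E : Finset (Sym2 (Fin n)))
    (hE : (SimpleGraph.pathGraph n).edgeFinset = E) :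
    LsMB (SimpleGraph.pathGraph n) = gvL (scoreList E) n true (List.finRange n) [] := by
  rw [LsMB, ← gvL_eq (mbScore (SimpleGraph.pathGraph n)) (scoreList E)
    (mbScore_path_eq n E hE) n true (List.finRange n) [] ∅ ∅
    (List.nodup_finRange n) (by simp) (by simp) (by simp)]

theorem RsMB_path (n : ℕ) (E : Finset (Sym2 (Fin n)))
    (hE : (SimpleGraph.pathGraph n).edgeFinset = E) :
    RsMB (SimpleGraph.pathGraph n) = gvL (scoreList E) n false (List.finRange n) [] := by
  rw [RsMB, ← gvL_eq (mbScore (SimpleGraph.pathGraph n)) (scoreList E)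
    (mbScore_path_eq n E hE) n false (List.finRange n) [] ∅ ∅
    (List.nodup_finRange n) (by simp) (by simp) (by simp)]

set_option maxRecDepth 1000000
set_option maxHeartbeats 16000000

/-- Maker-Breaker Incidence values on short paths. -/
theorem makerBreaker_incidence_small_paths :
    LsMB (SimpleGraph.pathGraph 1) = 0 ∧ LsMB (SimpleGraph.pathGraph 2) = 0 ∧
    LsMB (SimpleGraph.pathGraph 3) = 1 ∧ LsMB (SimpleGraph.pathGraph 4) = 1 ∧
    LsMB (SimpleGraph.pathGraph 5) = 1 ∧ LsMB (SimpleGraph.pathGraph 6) = 1 ∧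
    LsMB (SimpleGraph.pathGraph 7) = 1 ∧
    RsMB (SimpleGraph.pathGraph 1) = 0 ∧ RsMB (SimpleGraph.pathGraph 2) = 0 ∧
    RsMB (SimpleGraph.pathGraph 3) = 0 ∧ RsMB (SimpleGraph.pathGraph 4) = 0 ∧
    RsMB (SimpleGraph.pathGraph 5) = 0 ∧ RsMB (SimpleGraph.pathGraph 6) = 1 ∧
    RsMB (SimpleGraph.pathGraph 7) = 1 := by
  refine ⟨?_, ?_, ?_, ?_, ?_, ?_, ?_, ?_, ?_, ?_, ?_, ?_, ?_, ?_⟩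
  · rw [LsMB_path 1 ∅ (by decide)]; decide
  · rw [LsMB_path 2 {s(0,1)} (by decide)]; decide
  · rw [LsMB_path 3 {s(0,1), s(1,2)} (by decide)]; decide
  · rw [LsMB_path 4 {s(0,1), s(1,2), s(2,3)} (by decide)]; decide
  · rw [LsMB_path 5 {s(0,1), s(1,2), s(2,3), s(3,4)} (by decide)]; decide
  · rw [LsMB_path 6 {s(0,1), s(1,2), s(2,3), s(3,4), s(4,5)} (by decide)]; decide
  · rw [LsMB_path 7 {s(0,1), s(1,2), s(2,3), s(3,4), s(4,5), s(5,6)} (by decide)]; decide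
  · rw [RsMB_path 1 ∅ (by decide)]; decide
  · rw [RsMB_path 2 {s(0,1)} (by decide)]; decide
  · rw [RsMB_path 3 {s(0,1), s(1,2)} (by decide)]; decide
  · rw [RsMB_path 4 {s(0,1), s(1,2), s(2,3)} (by decide)]; decide
  · rw [RsMB_path 5 {s(0,1), s(1,2), s(2,3), s(3,4)} (by decide)]; decide
  · rw [RsMB_path 6 {s(0,1), s(1,2), s(2,3), s(3,4), s(4,5)} (by decide)]; decide
  · rw [RsMB_path 7 {s(0,1), s(1,2), s(2,3), s(3,4), s(4,5), s(5,6)} (by decide)]; decide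
end
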